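/- Let a>0, α,β∈ℝ and k∈ℂ with k≠0. There exists a twice continuously differentiable function ψ:[-a,a]→ℂ, not identically zero, with −ψ″(x)=k²ψ(x) for all x∈[-a,a], ψ′(a)+(iα+β)ψ(a)=0 and ψ′(−a)+(iα−β)ψ(−a)=0, if and only if (k²−α²−β²)·sin(2ka) − 2βk·cos(2ka) = 0. -/

import Mathlib

open Complex

/-! ### Auxiliary definitions -/

noncomputable def ptG (A B k : ℂ) (x : ℝ) : ℂ :=
  A * Complex.cos (k * x) + B * Complex.sin (k * x)

noncomputable def ptG' (A B k : ℂ) (x : ℝ) : ℂ :=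
  -(A * k * Complex.sin (k * x)) + B * k * Complex.cos (k * x)

noncomputable def ptM11 (α β : ℝ) (k : ℂ) (a : ℝ) : ℂ :=
  -(k * Complex.sin (k * a)) + (Complex.I * α + β) * Complex.cos (k * a)

noncomputable def ptM12 (α β : ℝ) (k : ℂ) (a : ℝ) : ℂ :=
  k * Complex.cos (k * a) + (Complex.I * α + β) * Complex.sin (k * a)

noncomputable def ptM21 (α β : ℝ) (k : ℂ) (a : ℝ) : ℂ :=
  k * Complex.sin (k * a) + (Complex.I * α - β) * Complex.cos (k * a)

noncomputable def ptM22 (α β : ℝ) (k : ℂ) (a : ℝ) : ℂ :=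
  k * Complex.cos (k * a) - (Complex.I * α - β) * Complex.sin (k * a)

/-! ### Derivative lemmas -/

lemma hasDerivAt_ccos (k : ℂ) (x : ℝ) :
    HasDerivAt (fun y : ℝ => Complex.cos (k * y)) (-(k * Complex.sin (k * x))) x := by
  have h := ((Complex.hasDerivAt_cos (k * x)).comp (x : ℂ)
    ((hasDerivAt_id (x : ℂ)).const_mul k)).comp_ofReal
  convert h using 1
  · rfl
  ring

lemma hasDerivAt_csin (k : ℂ) (x : ℝ) :
    HasDerivAt (fun y : ℝ => Complex.sin (k * y)) (k * Complex.cos (k * x)) x := by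
  have h := ((Complex.hasDerivAt_sin (k * x)).comp (x : ℂ)
    ((hasDerivAt_id (x : ℂ)).const_mul k)).comp_ofReal
  convert h using 1
  · rfl
  ring

lemma hasDerivAt_cexp_mul (c : ℂ) (x : ℝ) :
    HasDerivAt (fun y : ℝ => Complex.exp (c * y)) (c * Complex.exp (c * x)) x := by
  have h := ((Complex.hasDerivAt_exp (c * x)).comp (x : ℂ)
    ((hasDerivAt_id (x : ℂ)).const_mul c)).comp_ofReal
  convert h using 1
  · rfl
  ring

lemma ptG_hasDerivAt (A B k : ℂ) (x : ℝ) :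
    HasDerivAt (ptG A B k) (ptG' A B k x) x := by
  have h := ((hasDerivAt_ccos k x).const_mul A).add ((hasDerivAt_csin k x).const_mul B)
  refine h.congr_deriv ?_
  simp only [ptG']
  ring

lemma ptG'_hasDerivAt (A B k : ℂ) (x : ℝ) :
    HasDerivAt (ptG' A B k) (-(k ^ 2) * ptG A B k x) x := by
  have h := (((hasDerivAt_csin k x).const_mul (A * k)).neg).add
    ((hasDerivAt_ccos k x).const_mul (B * k))
  refine h.congr_deriv ?_
  simp only [ptG]
  ring

lemma const_of_hasDerivAt_zero {s : Set ℝ} (hs : Convex ℝ s) {f : ℝ → ℂ}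
    (hf : ∀ x ∈ s, HasDerivAt f 0 x) {x y : ℝ} (hx : x ∈ s) (hy : y ∈ s) : f x = f y := by
  have h := Convex.norm_image_sub_le_of_norm_hasDerivWithin_le (C := 0) (f' := fun _ => (0 : ℂ))
    (fun z hz => (hf z hz).hasDerivWithinAt) (fun z _ => by simp) hs hy hx
  have h0 : ‖f x - f y‖ ≤ 0 := by simpa using h
  have : f x - f y = 0 := norm_eq_zero.mp (le_antisymm h0 (norm_nonneg _))
  exact sub_eq_zero.mp this

/-! ### Determinant identity -/

lemma pt_det_eq (α β : ℝ) (k : ℂ) (a : ℝ) :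
    ptM11 α β k a * ptM22 α β k a - ptM12 α β k a * ptM21 α β k a
      = -((k ^ 2 - (α : ℂ) ^ 2 - (β : ℂ) ^ 2) * Complex.sin (2 * k * (a : ℂ))
          - 2 * (β : ℂ) * k * Complex.cos (2 * k * (a : ℂ))) := by
  have hw : (2 * k * (a : ℂ)) = 2 * (k * a) := by ring
  rw [hw, Complex.sin_two_mul, Complex.cos_two_mul]
  simp only [ptM11, ptM12, ptM21, ptM22]
  linear_combination (-2 * (β : ℂ) * k) * Complex.sin_sq_add_cos_sq (k * a) +
    (-2 * (α : ℂ) ^ 2 * Complex.sin (k * a) * Complex.cos (k * a)) * Complex.I_sq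

/-- A nontrivial twice continuously differentiable solution of `-ψ'' = k²ψ`
on `[-a, a]` with separated PT-symmetric boundary conditions `(α, β)`. -/
def IsRobinSol (a α β : ℝ) (k : ℂ) (ψ : ℝ → ℂ) : Prop :=
  ∃ ψ' ψ'' : ℝ → ℂ,
    (∀ x ∈ Set.Icc (-a) a, HasDerivAt ψ (ψ' x) x) ∧
    (∀ x ∈ Set.Icc (-a) a, HasDerivAt ψ' (ψ'' x) x) ∧
    ContinuousOn ψ'' (Set.Icc (-a) a) ∧
    (∃ x ∈ Set.Icc (-a) a, ψ x ≠ 0) ∧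
    (∀ x ∈ Set.Icc (-a) a, -ψ'' x = k ^ 2 * ψ x) ∧
    ψ' a + (Complex.I * (α : ℂ) + (β : ℂ)) * ψ a = 0 ∧
    ψ' (-a) + (Complex.I * (α : ℂ) - (β : ℂ)) * ψ (-a) = 0

/-- If `(A, B)` is a nonzero kernel vector of the boundary matrix, then
`ptG A B k` is a Robin solution. -/
lemma robin_of_kernel (a α β : ℝ) (ha : 0 < a) (k : ℂ) (hk : k ≠ 0) (A B : ℂ)
    (hAB : ¬(A = 0 ∧ B = 0))
    (h1 : ptM11 α β k a * A + ptM12 α β k a * B = 0)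
    (h2 : ptM21 α β k a * A + ptM22 α β k a * B = 0) :
    IsRobinSol a α β k (ptG A B k) := by
  refine ⟨ptG' A B k, fun x => -(k ^ 2) * ptG A B k x,
    fun x _ => ptG_hasDerivAt A B k x, fun x _ => ptG'_hasDerivAt A B k x, ?_, ?_, ?_, ?_, ?_⟩
  · have : Continuous (fun x : ℝ => -(k ^ 2) * ptG A B k x) := by
      unfold ptG; fun_prop
    exact this.continuousOn
  · by_contra hzero
    push_neg at hzero
    have h0mem : (0 : ℝ) ∈ Set.Icc (-a) a := ⟨by linarith, ha.le⟩
    have hA : A = 0 := by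
      have := hzero 0 h0mem
      simpa [ptG] using this
    have hU : UniqueDiffWithinAt ℝ (Set.Icc (-a) a) 0 :=
      (uniqueDiffOn_Icc (by linarith : -a < a)) 0 h0mem
    have hd : HasDerivWithinAt (fun _ : ℝ => (0 : ℂ)) (ptG' A B k 0) (Set.Icc (-a) a) 0 :=
      ((ptG_hasDerivAt A B k 0).hasDerivWithinAt).congr
        (fun y hy => (hzero y hy).symm) (hzero 0 h0mem).symm
    have hder : ptG' A B k 0 = 0 := by
      have h1' := hd.derivWithin hU
      have h2' : derivWithin (fun _ : ℝ => (0 : ℂ)) (Set.Icc (-a) a) 0 = 0 :=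
        by simp
      rw [← h1', h2']
    have hB : B = 0 := by
      have : B * k = 0 := by simpa [ptG'] using hder
      rcases mul_eq_zero.mp this with h | h
      · exact h
      · exact absurd h hk
    exact hAB ⟨hA, hB⟩
  · intro x _; ring
  · simp only [ptG, ptG', ptM11, ptM12] at h1 ⊢
    linear_combination h1
  · simp only [ptG, ptG', Complex.ofReal_neg, mul_neg, Complex.sin_neg, Complex.cos_neg]
    simp only [ptM21, ptM22] at h2
    linear_combination h2

/-- the eigenvalue equation
`(k² - α² - β²) sin(2ka) - 2βk cos(2ka) = 0` characterizes the eigenvalues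
`λ = k²` of the zero-curvature PT-symmetric Robin problem. -/
theorem pt_zero_curvature_eigenvalue_equation
    (a α β : ℝ) (ha : 0 < a) (k : ℂ) (hk : k ≠ 0) :
    (∃ ψ : ℝ → ℂ, IsRobinSol a α β k ψ) ↔
      (k ^ 2 - (α : ℂ) ^ 2 - (β : ℂ) ^ 2) * Complex.sin (2 * k * (a : ℂ))
        - 2 * (β : ℂ) * k * Complex.cos (2 * k * (a : ℂ)) = 0 := by
  constructor
  · rintro ⟨ψ, ψ', ψ'', hψ, hψ', -, ⟨x0, hx0, hx0ne⟩, hode, hbc1, hbc2⟩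
    set S := Set.Icc (-a) a with hS
    have h0mem : (0 : ℝ) ∈ S := ⟨by linarith, ha.le⟩
    have hamem : a ∈ S := ⟨by linarith, le_refl a⟩
    have hmamem : -a ∈ S := ⟨le_refl _, by linarith⟩
    set A : ℂ := ψ 0 with hA
    set B : ℂ := ψ' 0 / k with hB
    -- the function u = ψ' - g' + ik(ψ - g) vanishes on S
    have hu : ∀ x ∈ S, HasDerivAt
        (fun x : ℝ => ψ' x - ptG' A B k x + Complex.I * k * (ψ x - ptG A B k x))
        (ψ'' x - (-(k ^ 2) * ptG A B k x) + Complex.I * k * (ψ' x - ptG' A B k x)) x :=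
      fun x hx => ((hψ' x hx).sub (ptG'_hasDerivAt A B k x)).add
        (((hψ x hx).sub (ptG_hasDerivAt A B k x)).const_mul (Complex.I * k))
    have hF : ∀ x ∈ S, HasDerivAt
        (fun x : ℝ => Complex.exp (-(Complex.I * k) * x) *
          (ψ' x - ptG' A B k x + Complex.I * k * (ψ x - ptG A B k x))) 0 x := by
      intro x hx
      have h := (hasDerivAt_cexp_mul (-(Complex.I * k)) x).mul (hu x hx)
      refine h.congr_deriv ?_
      symm
      have hodex := hode x hx
      linear_combination (Complex.exp (-(Complex.I * k) * (x : ℂ))) * hodex +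
        (k ^ 2 * (ψ x - ptG A B k x) * Complex.exp (-(Complex.I * k) * (x : ℂ))) *
          Complex.I_sq
    have hu0 : ψ' 0 - ptG' A B k 0 + Complex.I * k * (ψ 0 - ptG A B k 0) = 0 := by
      simp only [ptG, ptG', Complex.ofReal_zero, mul_zero, Complex.sin_zero, Complex.cos_zero]
      field_simp [hB, hA]
      simp [hB, hA, hk]
    have huz : ∀ x ∈ S, ψ' x - ptG' A B k x + Complex.I * k * (ψ x - ptG A B k x) = 0 := by
      intro x hx
      have hc := const_of_hasDerivAt_zero (convex_Icc (-a) a) hF hx h0mem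
      rw [show ((0:ℝ):ℂ) = 0 from rfl] at hc
      simp only [mul_zero, Complex.ofReal_zero, Complex.exp_zero, one_mul] at hc
      rw [hu0] at hc
      exact (mul_eq_zero.mp hc).resolve_left (Complex.exp_ne_zero _)
    have hG : ∀ x ∈ S, HasDerivAt
        (fun x : ℝ => Complex.exp ((Complex.I * k) * x) * (ψ x - ptG A B k x)) 0 x := by
      intro x hx
      have h := (hasDerivAt_cexp_mul (Complex.I * k) x).mul
        ((hψ x hx).sub (ptG_hasDerivAt A B k x))
      refine h.congr_deriv ?_
      symm
      rw [Pi.sub_apply]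
      linear_combination (-(Complex.exp ((Complex.I * k) * (x : ℂ)))) * huz x hx
    have hpsi : ∀ x ∈ S, ψ x = ptG A B k x := by
      intro x hx
      have hc := const_of_hasDerivAt_zero (convex_Icc (-a) a) hG hx h0mem
      have hg0 : ptG A B k 0 = A := by
        simp [ptG]
      simp only [Complex.ofReal_zero, mul_zero, Complex.exp_zero, one_mul, hg0, ← hA,
        sub_self, mul_zero] at hc
      have := (mul_eq_zero.mp hc).resolve_left (Complex.exp_ne_zero _)
      exact sub_eq_zero.mp this
    have hpsi' : ∀ x ∈ S, ψ' x = ptG' A B k x := by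
      intro x hx
      have h := huz x hx
      rw [hpsi x hx, sub_self, mul_zero, add_zero] at h
      exact sub_eq_zero.mp h
    -- boundary conditions for (A, B)
    have hb1 : ptM11 α β k a * A + ptM12 α β k a * B = 0 := by
      have h := hbc1
      rw [hpsi a hamem, hpsi' a hamem] at h
      simp only [ptG, ptG'] at h
      simp only [ptM11, ptM12]
      linear_combination h
    have hb2 : ptM21 α β k a * A + ptM22 α β k a * B = 0 := by
      have h := hbc2
      rw [hpsi (-a) hmamem, hpsi' (-a) hmamem] at h
      simp only [ptG, ptG', Complex.ofReal_neg, mul_neg, Complex.sin_neg, Complex.cos_neg] at h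
      simp only [ptM21, ptM22]
      linear_combination h
    -- nontriviality
    have hABne : ¬(A = 0 ∧ B = 0) := by
      rintro ⟨hA0, hB0⟩
      apply hx0ne
      rw [hpsi x0 hx0]
      simp [ptG, hA0, hB0]
    have hdet : ptM11 α β k a * ptM22 α β k a - ptM12 α β k a * ptM21 α β k a = 0 := by
      rcases not_and_or.mp hABne with hA0 | hB0
      · have hda : (ptM11 α β k a * ptM22 α β k a - ptM12 α β k a * ptM21 α β k a) * A = 0 := by
          linear_combination ptM22 α β k a * hb1 - ptM12 α β k a * hb2
        exact (mul_eq_zero.mp hda).resolve_right hA0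
      · have hdb : (ptM11 α β k a * ptM22 α β k a - ptM12 α β k a * ptM21 α β k a) * B = 0 := by
          linear_combination ptM11 α β k a * hb2 - ptM21 α β k a * hb1
        exact (mul_eq_zero.mp hdb).resolve_right hB0
    linear_combination pt_det_eq α β k a - hdet
  · intro heig
    by_cases hrow : ptM11 α β k a = 0 ∧ ptM12 α β k a = 0
    · by_cases hrow2 : ptM21 α β k a = 0 ∧ ptM22 α β k a = 0
      · exact ⟨_, robin_of_kernel a α β ha k hk 1 0
          (by simp) (by rw [hrow.1, hrow.2]; ring) (by rw [hrow2.1, hrow2.2]; ring)⟩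
      · refine ⟨_, robin_of_kernel a α β ha k hk (ptM22 α β k a) (-(ptM21 α β k a)) ?_ ?_ ?_⟩
        · rintro ⟨h1, h2⟩
          exact hrow2 ⟨neg_eq_zero.mp h2, h1⟩
        · rw [hrow.1, hrow.2]; ring
        · ring
    · refine ⟨_, robin_of_kernel a α β ha k hk (ptM12 α β k a) (-(ptM11 α β k a)) ?_ ?_ ?_⟩
      · rintro ⟨h1, h2⟩
        exact hrow ⟨neg_eq_zero.mp h2, h1⟩
      · ring
      · linear_combination heig - pt_det_eq α β k a
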